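/- Let a, b₁, b₂, γ be positive reals and c, τ real parameters. Then λ = 0 is a root of Δ_{c,τ} of multiplicity at least two (i.e. Δ_{c,τ}(0) = 0 and the λ-derivative of Δ_{c,τ} vanishes at 0) if and only if c²b₁b₂ = (ab₁+γ)(ab₂+γ) and τ = (b₁+b₂)/(2b₁b₂) − (a+b₁)/(2(γ+ab₁)) − (a+b₂)/(2(γ+ab₂)). -/

import Mathlib

noncomputable section

open Real

/-- A = b₁+b₂+2a -/
def Ac (a b1 b2 : ℝ) : ℝ := b1 + b2 + 2*a
/-- B = 2a(b₁+b₂)+a²+b₁b₂+2γ -/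
def Bc (a b1 b2 γ : ℝ) : ℝ := 2*a*(b1+b2) + a^2 + b1*b2 + 2*γ
/-- C = (a+b₁)(ab₂+γ)+(a+b₂)(ab₁+γ) -/
def Cc (a b1 b2 γ : ℝ) : ℝ := (a+b1)*(a*b2+γ) + (a+b2)*(a*b1+γ)
/-- D = (ab₁+γ)(ab₂+γ) -/
def Dc (a b1 b2 γ : ℝ) : ℝ := (a*b1+γ)*(a*b2+γ)
/-- P = A² − 2B -/
def Pc (a b1 b2 γ : ℝ) : ℝ := (Ac a b1 b2)^2 - 2*(Bc a b1 b2 γ)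
/-- Q = B² + 2D − 2AC − c⁴ -/
def Qc (a b1 b2 γ c : ℝ) : ℝ :=
  (Bc a b1 b2 γ)^2 + 2*(Dc a b1 b2 γ) - 2*(Ac a b1 b2)*(Cc a b1 b2 γ) - c^4
/-- R = C² − 2BD − c⁴(b₁²+b₂²) -/
def Rc (a b1 b2 γ c : ℝ) : ℝ :=
  (Cc a b1 b2 γ)^2 - 2*(Bc a b1 b2 γ)*(Dc a b1 b2 γ) - c^4*(b1^2+b2^2)
/-- S = D² − c⁴b₁²b₂² -/
def Sc (a b1 b2 γ c : ℝ) : ℝ := (Dc a b1 b2 γ)^2 - c^4*b1^2*b2^2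
/-- h(z) = z⁴ + Pz³ + Qz² + Rz + S -/
def hq (a b1 b2 γ c z : ℝ) : ℝ :=
  z^4 + Pc a b1 b2 γ*z^3 + Qc a b1 b2 γ c*z^2 + Rc a b1 b2 γ c*z + Sc a b1 b2 γ c
/-- h′(z) = 4z³ + 3Pz² + 2Qz + R -/
def hq' (a b1 b2 γ c z : ℝ) : ℝ :=
  4*z^3 + 3*(Pc a b1 b2 γ)*z^2 + 2*(Qc a b1 b2 γ c)*z + Rc a b1 b2 γ c
/-- The characteristic function Δ_{c,τ}(λ) of the linearization at the trivial equilibrium. -/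
def charFun (a b1 b2 γ c τ : ℝ) (lam : ℂ) : ℂ :=
  (lam^2 + (a+b1 : ℝ)*lam + (a*b1+γ : ℝ)) * (lam^2 + (a+b2 : ℝ)*lam + (a*b2+γ : ℝ))
    - (c^2 : ℝ) * (lam + (b1 : ℝ)) * (lam + (b2 : ℝ)) * Complex.exp ((-2) * lam * (τ : ℝ))
/-- N(ω) = c²[(b₁+b₂)²ω² + (ω²−b₁b₂)²] -/
def Nfun (b1 b2 c ω : ℝ) : ℝ := c^2*((b1+b2)^2*ω^2 + (ω^2 - b1*b2)^2)
/-- a*(ω) -/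
def aStar (a b1 b2 γ c ω : ℝ) : ℝ :=
  ((ω^4 - Bc a b1 b2 γ*ω^2 + Dc a b1 b2 γ)*(b1+b2)*ω
    + (Ac a b1 b2*ω^3 - Cc a b1 b2 γ*ω)*(b1*b2 - ω^2)) / Nfun b1 b2 c ω
/-- b*(ω) -/
def bStar (a b1 b2 γ c ω : ℝ) : ℝ :=
  ((ω^4 - Bc a b1 b2 γ*ω^2 + Dc a b1 b2 γ)*(b1*b2 - ω^2)
    + (-(Ac a b1 b2)*ω^3 + Cc a b1 b2 γ*ω)*(b1+b2)*ω) / Nfun b1 b2 c ω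
/-- the critical delays τ^{(j)}(ω) -/
def tauJ (a b1 b2 γ c : ℝ) (j : ℕ) (ω : ℝ) : ℝ :=
  if 0 ≤ aStar a b1 b2 γ c ω then
    (1/(2*ω)) * (Real.arccos (bStar a b1 b2 γ c ω) + 2*(j:ℝ)*Real.pi)
  else
    (1/(2*ω)) * (2*Real.pi - Real.arccos (bStar a b1 b2 γ c ω) + 2*(j:ℝ)*Real.pi)

lemma cf0 (a b1 b2 γ c τ : ℝ) :
    charFun a b1 b2 γ c τ 0 = ((a*b1+γ : ℝ):ℂ)*((a*b2+γ : ℝ):ℂ) - ((c^2*b1*b2 : ℝ):ℂ) := by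
  simp [charFun]

lemma cfderiv (a b1 b2 γ c τ : ℝ) :
    HasDerivAt (charFun a b1 b2 γ c τ)
      ((((a+b1)*(a*b2+γ) + (a+b2)*(a*b1+γ) - (c^2*(b1+b2) - 2*τ*(c^2*b1*b2)) : ℝ)):ℂ) 0 := by
  have hp1 : HasDerivAt (fun lam : ℂ => lam^2 + ((a+b1:ℝ):ℂ)*lam + ((a*b1+γ:ℝ):ℂ))
      (((a+b1:ℝ)):ℂ) 0 := by
    have h := ((hasDerivAt_pow 2 (0:ℂ)).add
      (HasDerivAt.const_mul ((a+b1:ℝ):ℂ) (hasDerivAt_id (0:ℂ)))).add_const ((a*b1+γ:ℝ):ℂ)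
    simpa using h
  have hp2 : HasDerivAt (fun lam : ℂ => lam^2 + ((a+b2:ℝ):ℂ)*lam + ((a*b2+γ:ℝ):ℂ))
      (((a+b2:ℝ)):ℂ) 0 := by
    have h := ((hasDerivAt_pow 2 (0:ℂ)).add
      (HasDerivAt.const_mul ((a+b2:ℝ):ℂ) (hasDerivAt_id (0:ℂ)))).add_const ((a*b2+γ:ℝ):ℂ)
    simpa using h
  have hin : HasDerivAt (fun lam : ℂ => (-2) * lam * ((τ:ℝ):ℂ)) ((-2)*((τ:ℝ):ℂ)) 0 := by
    have h := (HasDerivAt.const_mul (-2:ℂ) (hasDerivAt_id (0:ℂ))).mul_const ((τ:ℝ):ℂ)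
    simpa using h
  have hexp := hin.cexp
  have hr : HasDerivAt (fun lam : ℂ => ((c^2:ℝ):ℂ) * (lam + ((b1:ℝ):ℂ)) * (lam + ((b2:ℝ):ℂ)))
      (((c^2:ℝ):ℂ)*(((b2:ℝ):ℂ)) + ((c^2:ℝ):ℂ)*((b1:ℝ):ℂ)) 0 := by
    have h := (HasDerivAt.const_mul ((c^2:ℝ):ℂ) ((hasDerivAt_id (0:ℂ)).add_const ((b1:ℝ):ℂ))).mul
      ((hasDerivAt_id (0:ℂ)).add_const ((b2:ℝ):ℂ))
    exact h.congr_deriv (by simp)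
  have h := (hp1.mul hp2).sub (hr.mul hexp)
  refine h.congr_deriv ?_
  simp
  ring


/-- λ = 0 is a root of Δ_{c,τ} of multiplicity at least two iff
c²b₁b₂ = (ab₁+γ)(ab₂+γ) and τ = (b₁+b₂)/(2b₁b₂) − (a+b₁)/(2(γ+ab₁)) − (a+b₂)/(2(γ+ab₂)). -/
theorem stmt11 (a b1 b2 γ c τ : ℝ)
    (ha : 0 < a) (hb1 : 0 < b1) (hb2 : 0 < b2) (hγ : 0 < γ) :
    (charFun a b1 b2 γ c τ 0 = 0 ∧ deriv (charFun a b1 b2 γ c τ) 0 = 0) ↔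
      (c^2*b1*b2 = (a*b1+γ)*(a*b2+γ) ∧
        τ = (b1+b2)/(2*b1*b2) - (a+b1)/(2*(γ+a*b1)) - (a+b2)/(2*(γ+a*b2))) := by
  rw [cf0, (cfderiv a b1 b2 γ c τ).deriv]
  rw [sub_eq_zero]
  rw [show (((a*b1+γ : ℝ):ℂ)*((a*b2+γ : ℝ):ℂ)) = (((a*b1+γ)*(a*b2+γ) : ℝ):ℂ) by push_cast; ring]
  rw [Complex.ofReal_inj, Complex.ofReal_eq_zero]
  have hd1 : γ + a*b1 ≠ 0 := by positivity
  have hd2 : γ + a*b2 ≠ 0 := by positivity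
  have hb : b1*b2 ≠ 0 := by positivity
  constructor
  · rintro ⟨h1, h2⟩
    refine ⟨h1.symm, ?_⟩
    field_simp
    linear_combination b1*b2*h2 + (2*τ*b1*b2 - (b1+b2))*h1
  · rintro ⟨h1, h2⟩
    refine ⟨h1.symm, ?_⟩
    subst h2
    field_simp
    linear_combination (-((a+b1)*(a*b2+γ) + (a+b2)*(a*b1+γ)))*h1
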